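/- Let $m \geq 1$ and let $E_x$ be the $m \times m$ lower triangular matrix with $(i,j)$-entry $(-1)^{i-j} E_{i-j,[0,i[}$ (signed elementary symmetric polynomials in $x_0, \dots, x_{i-1}$), and $P_x$ the matrix with $(i,j)$-entry $P_{i-j,[0,j]}$ (complete homogeneous symmetric polynomials in $x_0, \dots, x_j$). Then $E_x P_x = I$. -/

import Mathlib

open MvPolynomial in
/-- Elementary symmetric polynomial `E_{d,s}`, zero for `d < 0`. -/
noncomputable def Esym (d : ℤ) (s : Finset ℕ) : MvPolynomial ℕ ℤ :=
  if 0 ≤ d then ∑ t ∈ s.powersetCard d.toNat, ∏ i ∈ t, X i else 0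

open MvPolynomial in
/-- Complete homogeneous symmetric polynomial `P_{d,s}`, zero for `d < 0`. -/
noncomputable def Hsym (d : ℤ) (s : Finset ℕ) : MvPolynomial ℕ ℤ :=
  if 0 ≤ d then ∑ m ∈ s.sym d.toNat, ((m : Multiset ℕ).map X).prod else 0

open MvPolynomial Finset

noncomputable def Ee (d : ℕ) (s : Finset ℕ) : MvPolynomial ℕ ℤ :=
  ∑ t ∈ s.powersetCard d, ∏ i ∈ t, X i

noncomputable def Hh (d : ℕ) (s : Finset ℕ) : MvPolynomial ℕ ℤ :=
  ∑ m ∈ s.sym d, ((m : Multiset ℕ).map X).prod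

lemma Ee_zero (s : Finset ℕ) : Ee 0 s = 1 := by simp [Ee]

lemma Hh_zero (s : Finset ℕ) : Hh 0 s = 1 := by
  have h0 : ((∅ : Sym ℕ 0) : Multiset ℕ) = 0 := rfl
  simp [Hh, h0]

lemma Hh_empty (d : ℕ) : Hh (d+1) ∅ = 0 := by simp [Hh]

lemma Ee_card_lt {d : ℕ} {s : Finset ℕ} (h : s.card < d) : Ee d s = 0 := by
  simp [Ee, Finset.powersetCard_eq_empty.2 h]

lemma Ee_insert {a : ℕ} {s : Finset ℕ} (ha : a ∉ s) (d : ℕ) :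
    Ee (d+1) (insert a s) = Ee (d+1) s + X a * Ee d s := by
  unfold Ee
  rw [Finset.powersetCard_succ_insert ha, Finset.sum_union, Finset.sum_image, Finset.mul_sum]
  · congr 1
    refine Finset.sum_congr rfl fun t ht => ?_
    have hat : a ∉ t := fun h => ha ((Finset.mem_powersetCard.1 ht).1 h)
    rw [Finset.prod_insert hat]
  · intro t1 h1 t2 h2 h
    have h1' : a ∉ t1 := fun h => ha ((Finset.mem_powersetCard.1 h1).1 h)
    have h2' : a ∉ t2 := fun h => ha ((Finset.mem_powersetCard.1 h2).1 h)
    have := congrArg (fun u => Finset.erase u a) h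
    simpa [Finset.erase_insert h1', Finset.erase_insert h2'] using this
  · rw [Finset.disjoint_left]
    intro t ht ht'
    obtain ⟨u, hu, rfl⟩ := Finset.mem_image.1 ht'
    exact ha ((Finset.mem_powersetCard.1 ht).1 (Finset.mem_insert_self a u))

lemma Hh_insert {b : ℕ} {s : Finset ℕ} (hb : b ∉ s) (d : ℕ) :
    Hh (d+1) (insert b s) = Hh (d+1) s + X b * Hh d (insert b s) := by
  unfold Hh
  rw [← Finset.sum_filter_add_sum_filter_not ((insert b s).sym (d+1)) (fun m => b ∈ m)]
  rw [add_comm]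
  congr 1
  · -- multisets not containing b: equal to s.sym (d+1)
    congr 1
    ext m
    simp only [Finset.mem_filter, Finset.mem_sym_iff, Finset.mem_insert]
    constructor
    · rintro ⟨h1, h2⟩ a ha
      rcases h1 a ha with rfl | h
      · exact absurd ha h2
      · exact h
    · intro h
      exact ⟨fun a ha => Or.inr (h a ha), fun hbm => hb (h b hbm)⟩
  · -- multisets containing b
    have himg : Finset.filter (fun m => b ∈ m) ((insert b s).sym (d+1))
        = Finset.image (Sym.cons b) ((insert b s).sym d) := by
      ext m
      simp only [Finset.mem_filter, Finset.mem_image, Finset.mem_sym_iff]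
      constructor
      · rintro ⟨h1, h2⟩
        refine ⟨m.erase b h2, fun a ha => h1 a ?_, Sym.cons_erase h2⟩
        have hm : a ∈ (m.erase b h2 : Multiset ℕ) := ha
        rw [Sym.coe_erase] at hm
        exact Multiset.mem_of_mem_erase hm
      · rintro ⟨u, hu, rfl⟩
        refine ⟨fun a ha => ?_, Sym.mem_cons_self b u⟩
        rcases Sym.mem_cons.1 ha with rfl | h
        · exact Finset.mem_insert_self a s
        · exact hu a h
    rw [himg, Finset.sum_image (fun u _ v _ h => (Sym.cons_inj_right b u v).1 h), Finset.mul_sum]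
    refine Finset.sum_congr rfl fun u _ => ?_
    rw [Sym.coe_cons, Multiset.map_cons, Multiset.prod_cons]

lemma key (B A : Finset ℕ) (hBA : B ⊆ A) (n : ℕ) :
    ∑ d ∈ Finset.range (n+1), (-1:MvPolynomial ℕ ℤ)^d * Ee d A * Hh (n-d) B
      = (-1)^n * Ee n (A \ B) := by
  induction B using Finset.induction_on generalizing n with
  | empty =>
    rw [Finset.sum_eq_single n]
    · simp [Hh_zero]
    · intro d hd hdn
      have hdlt : d < n := lt_of_le_of_ne (Nat.lt_succ_iff.1 (Finset.mem_range.1 hd)) hdn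
      obtain ⟨e, he⟩ : ∃ e, n - d = e + 1 := ⟨n - d - 1, by omega⟩
      rw [he, Hh_empty, mul_zero]
    · intro h; exact absurd (Finset.self_mem_range_succ n) h
  | @insert b B' hb ih =>
    have hbA : b ∈ A := hBA (Finset.mem_insert_self b B')
    have hB'A : B' ⊆ A := (Finset.subset_insert b B').trans hBA
    have hbC : b ∉ A \ insert b B' := fun h => (Finset.mem_sdiff.1 h).2 (Finset.mem_insert_self b B')
    have hsplit : A \ B' = insert b (A \ insert b B') := by
      rw [Finset.sdiff_insert, Finset.insert_erase (Finset.mem_sdiff.2 ⟨hbA, hb⟩)]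
    induction n with
    | zero => simp [Hh_zero, Ee_zero]
    | succ n ihn =>
      rw [Finset.sum_range_succ]
      have hstep : ∀ d ∈ Finset.range (n+1),
          (-1:MvPolynomial ℕ ℤ)^d * Ee d A * Hh (n+1-d) (insert b B')
            = (-1)^d * Ee d A * Hh (n+1-d) B'
              + X b * ((-1)^d * Ee d A * Hh (n-d) (insert b B')) := by
        intro d hd
        have hdn : d ≤ n := Nat.lt_succ_iff.1 (Finset.mem_range.1 hd)
        have h1 : n + 1 - d = (n - d) + 1 := by omega
        rw [h1, Hh_insert hb]
        ring
      rw [Finset.sum_congr rfl hstep, Finset.sum_add_distrib, ← Finset.mul_sum,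
        ihn, Nat.sub_self, Hh_zero]
      have hlast : ((-1:MvPolynomial ℕ ℤ))^(n+1) * Ee (n+1) A * 1
          = (-1)^(n+1) * Ee (n+1) A * Hh (n+1-(n+1)) B' := by
        rw [Nat.sub_self, Hh_zero]
      rw [add_right_comm, hlast, ← Finset.sum_range_succ
        (fun d => (-1:MvPolynomial ℕ ℤ)^d * Ee d A * Hh (n+1-d) B'), ih hB'A (n+1),
        hsplit, Ee_insert hbC]
      ring

lemma Esym_natCast (d : ℕ) (s : Finset ℕ) : Esym (d:ℤ) s = Ee d s := by
  simp [Esym, Ee]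
lemma Esym_neg {z : ℤ} (h : z < 0) (s : Finset ℕ) : Esym z s = 0 := if_neg (not_le.2 h)
lemma Hsym_natCast (d : ℕ) (s : Finset ℕ) : Hsym (d:ℤ) s = Hh d s := by
  simp [Hsym, Hh]
lemma Hsym_neg {z : ℤ} (h : z < 0) (s : Finset ℕ) : Hsym z s = 0 := if_neg (not_le.2 h)

lemma sign_cast (a : ℕ) : (((-1:ℤˣ)^(a:ℤ) : ℤˣ) : ℤ) = (-1:ℤ)^a := by
  rw [zpow_natCast]
  push_cast
  ring


/-- `E_x P_x = I`, where `(E_x)_{ij} = (-1)^{i-j} E_{i-j,[0,i[}` and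
`(P_x)_{ij} = P_{i-j,[0,j]}`. -/
theorem stmt_5 (m : ℕ) (hm : 1 ≤ m) :
    (Matrix.of fun i j : Fin m =>
        MvPolynomial.C ((((-1 : ℤˣ) ^ ((i : ℤ) - (j : ℤ)) : ℤˣ) : ℤ))
          * Esym ((i : ℤ) - (j : ℤ)) (Finset.Ico 0 (i : ℕ)))
      * (Matrix.of fun i j : Fin m => Hsym ((i : ℤ) - (j : ℤ)) (Finset.Icc 0 (j : ℕ)))
      = 1 := by
  apply Matrix.ext
  intro i j
  rw [Matrix.mul_apply, Matrix.one_apply]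
  simp only [Matrix.of_apply]
  set F : ℕ → MvPolynomial ℕ ℤ := fun k =>
    MvPolynomial.C ((((-1 : ℤˣ) ^ ((i : ℤ) - (k : ℤ)) : ℤˣ) : ℤ))
      * Esym ((i : ℤ) - (k : ℤ)) (Finset.Ico 0 (i : ℕ))
      * Hsym ((k : ℤ) - (j : ℤ)) (Finset.Icc 0 (j : ℕ)) with hF
  have h1 : ∑ k : Fin m,
      MvPolynomial.C ((((-1 : ℤˣ) ^ ((i : ℤ) - (k : ℤ)) : ℤˣ) : ℤ))
        * Esym ((i : ℤ) - (k : ℤ)) (Finset.Ico 0 (i : ℕ))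
        * Hsym ((k : ℤ) - (j : ℤ)) (Finset.Icc 0 (j : ℕ))
      = ∑ k ∈ Finset.range m, F k := Fin.sum_univ_eq_sum_range F m
  rw [h1]
  have hv : ∀ k : ℕ, (k < (j:ℕ) ∨ (i:ℕ) < k) → F k = 0 := by
    intro k hk
    rcases hk with hk | hk
    · rw [hF]
      dsimp only
      rw [Hsym_neg (by omega), mul_zero]
    · rw [hF]
      dsimp only
      rw [Esym_neg (by omega), mul_zero, zero_mul]
  rcases lt_trichotomy (i:ℕ) (j:ℕ) with hij | hij | hij
  · rw [if_neg (by intro h; subst h; exact lt_irrefl _ hij)]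
    exact Finset.sum_eq_zero fun k _ => hv k (by omega)
  · rw [if_pos (Fin.ext hij)]
    rw [Finset.sum_eq_single_of_mem (i:ℕ) (Finset.mem_range.2 i.isLt)
      (fun k _ hk => hv k (by omega))]
    rw [hF]
    dsimp only
    have e1 : (i:ℤ) - ((i:ℕ):ℤ) = ((0:ℕ):ℤ) := by push_cast; ring
    have e2 : ((i:ℕ):ℤ) - (j:ℤ) = ((0:ℕ):ℤ) := by push_cast; omega
    rw [e1, e2, Esym_natCast, Hsym_natCast, Ee_zero, Hh_zero, sign_cast]
    simp
  · rw [if_neg (by intro h; subst h; exact lt_irrefl _ hij)]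
    have hsub : Finset.Icc (j:ℕ) (i:ℕ) ⊆ Finset.range m :=
      fun k hk => Finset.mem_range.2 (lt_of_le_of_lt (Finset.mem_Icc.1 hk).2 i.isLt)
    rw [← Finset.sum_subset hsub (fun k _ hk => hv k (by
      rcases Finset.mem_Icc.not.1 hk with h; omega))]
    rw [← Finset.Ico_add_one_right_eq_Icc, Finset.sum_Ico_eq_sum_range]
    set n : ℕ := (i:ℕ) - (j:ℕ) with hn
    have hrange : (i:ℕ) + 1 - (j:ℕ) = n + 1 := by omega
    rw [hrange]
    set A : Finset ℕ := Finset.range (i:ℕ) with hA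
    set B : Finset ℕ := Finset.range ((j:ℕ)+1) with hB
    have hIco : Finset.Ico 0 (i:ℕ) = A := by rw [hA, Finset.range_eq_Ico]
    have hIcc : Finset.Icc 0 (j:ℕ) = B := by
      rw [hB, Finset.range_eq_Ico, Finset.Ico_add_one_right_eq_Icc]
    have hterm : ∀ d ∈ Finset.range (n+1),
        F ((j:ℕ) + d) = (-1:MvPolynomial ℕ ℤ)^(n-d) * Ee (n-d) A * Hh (n-(n-d)) B := by
      intro d hd
      have hdn : d ≤ n := Nat.lt_succ_iff.1 (Finset.mem_range.1 hd)
      have e1 : (i:ℤ) - (((j:ℕ) + d : ℕ):ℤ) = ((n-d : ℕ):ℤ) := by push_cast; omega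
      have e2 : (((j:ℕ) + d : ℕ):ℤ) - (j:ℤ) = ((d:ℕ):ℤ) := by push_cast; omega
      have e3 : n - (n - d) = d := by omega
      rw [hF]
      dsimp only
      rw [e1, e2, Esym_natCast, Hsym_natCast, sign_cast, hIco, hIcc, e3]
      rw [map_pow, map_neg, map_one]
    rw [Finset.sum_congr rfl hterm]
    have hrefl := Finset.sum_range_reflect
      (fun d => (-1:MvPolynomial ℕ ℤ)^d * Ee d A * Hh (n-d) B) (n+1)
    simp only [Nat.add_sub_cancel] at hrefl
    rw [hrefl]
    rw [key B A (by
      rw [hA, hB]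
      exact Finset.range_subset_range.2 (by omega)) n]
    rw [Ee_card_lt (by
      rw [Finset.card_sdiff_of_subset (by rw [hA, hB]; exact Finset.range_subset_range.2 (by omega)),
        Finset.card_range, Finset.card_range]
      omega), mul_zero]
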